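/- Let (Γ_n)_{n≥1} be a sequence of i.i.d. real random variables which are integrable with E Γ₁ = 0, essentially bounded above, and not almost surely equal to 0, and let C > 0. Define the random walk with drift term w_{n+1} = w_n + Γ_{n+1} − C·e^{w_n}. Then there exists A₀ < 0 such that for every deterministic initial condition w₀ < A₀, one has P(∃ n ∈ ℕ : w_n ≥ A₀) = 1. (The escape claim proved via the supermartingale log(−w_{n∧τ}) in the proof of Lemma 2.4.) -/

import Mathlib

open MeasureTheory ProbabilityTheory Filter Topology
open scoped ENNReal

noncomputable section

/-- The cubic stochastic operator `V_θ`, regarded as a map on (Euclidean) `ℝ³`. -/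
def Vcso (θ : ℝ) (x : EuclideanSpace ℝ (Fin 3)) : EuclideanSpace ℝ (Fin 3) :=
  WithLp.toLp 2 ![x 0 * ((x 0)^2 + 3*θ*(x 0)*(x 1 + x 2) + 3*(1-θ)*((x 1)^2 + (x 2)^2) + 2*(x 1)*(x 2)),
    x 1 * ((x 1)^2 + 3*θ*(x 1)*(x 2 + x 0) + 3*(1-θ)*((x 2)^2 + (x 0)^2) + 2*(x 2)*(x 0)),
    x 2 * ((x 2)^2 + 3*θ*(x 2)*(x 0 + x 1) + 3*(1-θ)*((x 0)^2 + (x 1)^2) + 2*(x 0)*(x 1))]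

/-- The simplex `Δ² = {x ∈ ℝ³ : x₁,x₂,x₃ ≥ 0, x₁+x₂+x₃ = 1}`. -/
def simplex2 : Set (EuclideanSpace ℝ (Fin 3)) :=
  {x | 0 ≤ x 0 ∧ 0 ≤ x 1 ∧ 0 ≤ x 2 ∧ x 0 + x 1 + x 2 = 1}

/-- The random orbit `φ_n(x) = V_{θ_n} ∘ ⋯ ∘ V_{θ_1}(x)` driven by the sequence
`θ_1, θ_2, … = θs 0, θs 1, …`. -/
def phiRDS (θs : ℕ → ℝ) : ℕ → EuclideanSpace ℝ (Fin 3) → EuclideanSpace ℝ (Fin 3)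
  | 0, x => x
  | n+1, x => Vcso (θs n) (phiRDS θs n x)

/-- The vertex `e₁ = (1,0,0)`. -/
def e1 : EuclideanSpace ℝ (Fin 3) := WithLp.toLp 2 ![1, 0, 0]

/-- The vertex `c = (1/2,1/2,0)`. -/
def cpt : EuclideanSpace ℝ (Fin 3) := WithLp.toLp 2 ![1/2, 1/2, 0]

/-- The vertex `C = (1/3,1/3,1/3)`. -/
def Cpt : EuclideanSpace ℝ (Fin 3) := WithLp.toLp 2 ![1/3, 1/3, 1/3]

/-- `G₁ = {y ∈ Δ² : y₁ ≥ y₂ ≥ y₃}`. -/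
def G1 : Set (EuclideanSpace ℝ (Fin 3)) :=
  {y ∈ simplex2 | y 0 ≥ y 1 ∧ y 1 ≥ y 2}

/-- The interior of `G₁`: `{y ∈ Δ² : y₁ > y₂ > y₃ > 0}`. -/
def intG1 : Set (EuclideanSpace ℝ (Fin 3)) :=
  {y ∈ simplex2 | y 0 > y 1 ∧ y 1 > y 2 ∧ y 2 > 0}

/-- The edge `M₁₂ = {y ∈ Δ² : y₁ = y₂ ≥ y₃}`. -/
def M12 : Set (EuclideanSpace ℝ (Fin 3)) :=
  {y ∈ simplex2 | y 0 = y 1 ∧ y 1 ≥ y 2}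

/-- The edge `M₂₃ = {y ∈ Δ² : y₁ ≥ y₂ = y₃}`. -/
def M23 : Set (EuclideanSpace ℝ (Fin 3)) :=
  {y ∈ simplex2 | y 0 ≥ y 1 ∧ y 1 = y 2}

/-- The edge `Γ₁₂ = {y ∈ Δ² : y₁ ≥ y₂, y₃ = 0}`. -/
def Gamma12 : Set (EuclideanSpace ℝ (Fin 3)) :=
  {y ∈ simplex2 | y 0 ≥ y 1 ∧ y 2 = 0}

/-- The seven fixed points `𝒜`. -/
def fixedA : Set (EuclideanSpace ℝ (Fin 3)) :=
  {(WithLp.toLp 2 ![1,0,0] : EuclideanSpace ℝ (Fin 3)), (WithLp.toLp 2 ![0,1,0] : EuclideanSpace ℝ (Fin 3)), (WithLp.toLp 2 ![0,0,1] : EuclideanSpace ℝ (Fin 3)), (WithLp.toLp 2 ![1/2,1/2,0] : EuclideanSpace ℝ (Fin 3)), (WithLp.toLp 2 ![1/2,0,1/2] : EuclideanSpace ℝ (Fin 3)), (WithLp.toLp 2 ![0,1/2,1/2] : EuclideanSpace ℝ (Fin 3)), (WithLp.toLp 2 ![1/3,1/3,1/3] : EuclideanSpace ℝ (Fin 3)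)}

/-- Positive part of `log t`, valued in `ℝ≥0∞`. -/
def logPos (t : ℝ) : ℝ≥0∞ := ENNReal.ofReal (Real.log t)

/-- Negative part of the extended logarithm (with `log 0 = -∞`), valued in `ℝ≥0∞`. -/
def logNeg (t : ℝ) : ℝ≥0∞ := if t ≤ 0 then ⊤ else ENNReal.ofReal (-Real.log t)

/-- `E log g(Θ) < 0` in the extended sense (the value `-∞` is allowed), where `Θ` has law `μ`:
the positive part of the extended expectation is strictly smaller than the negative part. -/
def expLogNeg (μ : Measure ℝ) (g : ℝ → ℝ) : Prop :=
  ∫⁻ θ, logPos (g θ) ∂μ < ∫⁻ θ, logNeg (g θ) ∂μ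

/-- `E log g(Θ) ≤ r` in the extended sense (the value `-∞` is allowed), where `Θ` has law `μ`. -/
def expLogLe (μ : Measure ℝ) (g : ℝ → ℝ) (r : ℝ) : Prop :=
  ∫⁻ θ, logPos (g θ) ∂μ + ENNReal.ofReal (-r) ≤ ∫⁻ θ, logNeg (g θ) ∂μ + ENNReal.ofReal r

/-- The topological support of a measure on `ℝ`: points all of whose open neighborhoods
have positive measure. -/
def measSupport (μ : Measure ℝ) : Set ℝ :=
  {t : ℝ | ∀ U : Set ℝ, IsOpen U → t ∈ U → 0 < μ U}

lemma aux_log_lin {a x : ℝ} (ha : 0 < a) (hax : 0 < a + x) :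
    Real.log (a + x) ≤ Real.log a + x / a := by
  have h := Real.log_le_sub_one_of_pos (show 0 < (a + x) / a from div_pos hax ha)
  rw [Real.log_div (ne_of_gt hax) (ne_of_gt ha)] at h
  have h2 : (a + x) / a - 1 = x / a := by field_simp; ring
  linarith

lemma aux_log_quad {a x : ℝ} (ha : 0 < a) (h1 : -(a/8) ≤ x) (h2 : x ≤ 0) :
    Real.log (a + x) ≤ Real.log a + x / a - x^2 / (4 * a^2) := by
  set s : ℝ := -x / a with hs
  have hs0 : 0 ≤ s := div_nonneg (neg_nonneg.2 h2) ha.le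
  have hs8 : s ≤ 1/8 := by
    rw [hs, div_le_iff₀ ha]; nlinarith
  have hslt : |s| < 1 := by rw [abs_of_nonneg hs0]; linarith
  have hser := Real.abs_log_sub_add_sum_range_le hslt 2
  have hsum : (∑ i ∈ Finset.range 2, s ^ (i + 1) / (i + 1)) = s + s^2/2 := by
    simp [Finset.sum_range_succ]
    norm_num
  rw [hsum] at hser
  rw [abs_of_nonneg hs0] at hser
  have hle := (abs_le.1 hser).2
  have h1s : (7:ℝ)/8 ≤ 1 - s := by linarith
  have hcube : s^3 / (1 - s) ≤ s^2/4 := by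
    rw [div_le_iff₀ (by linarith)]
    nlinarith
  have hlog1s : Real.log (1 - s) ≤ -s - s^2/4 := by
    have : Real.log (1 - s) ≤ -(s + s^2/2) + s^3/(1-s) := by linarith
    linarith
  have hax : a + x = a * (1 - s) := by
    have : s * a = -x := by rw [hs]; field_simp
    nlinarith [this]
  rw [hax, Real.log_mul (ne_of_gt ha) (by linarith : (1:ℝ) - s ≠ 0)]
  have e1 : -s = x / a := by rw [hs]; field_simp
  have e2 : s^2/4 = x^2/(4*a^2) := by
    rw [hs, div_pow, neg_pow]
    rw [div_div]
    ring_nf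
  linarith

lemma step_ineq {M a G u δ κ : ℝ} (hM : 1 ≤ M) (hG : G ≤ M) (ha : 8*M + 8 < a)
    (hu : 0 < u) (hu2 : u * (4*a^2) ≤ κ) (hδ : 0 < δ) :
    Real.log (a - G + u) ≤ Real.log a - G/a - ((if δ ≤ G then δ^2 else 0) - κ)/(4*a^2) := by
  have ha0 : 0 < a := by linarith
  have haG : 0 < a - G := by linarith
  have h4a : (0:ℝ) < 4*a^2 := by positivity
  have key1 : Real.log ((a - G) + u) ≤ Real.log (a - G) + u / (a - G) :=
    aux_log_lin haG (by linarith)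
  have key2 : u / (a - G) ≤ κ / (4 * a^2) := by
    have hA : u / (a - G) ≤ u := div_le_self hu.le (by linarith)
    have hB : u ≤ κ / (4*a^2) := (le_div_iff₀ h4a).mpr hu2
    linarith
  have key3 : Real.log (a - G) ≤ Real.log a + (-G)/a - (if δ ≤ G then δ^2 else 0)/(4*a^2) := by
    by_cases hδG : δ ≤ G
    · rw [if_pos hδG]
      have hq := aux_log_quad ha0 (show -(a/8) ≤ -G by nlinarith) (by linarith : -G ≤ 0)
      have harw : a + -G = a - G := by ring
      rw [harw] at hq
      have hsq : δ^2 ≤ (-G)^2 := by nlinarith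
      have hdiv : δ^2/(4*a^2) ≤ (-G)^2/(4*a^2) := (div_le_div_iff_of_pos_right h4a).mpr hsq
      linarith
    · rw [if_neg hδG]
      have hq := aux_log_lin ha0 (show 0 < a + -G by linarith)
      have harw : a + -G = a - G := by ring
      rw [harw] at hq
      simp only [zero_div]
      linarith
  have hfin : Real.log a + (-G)/a - (if δ ≤ G then δ^2 else 0)/(4*a^2) + κ/(4*a^2)
      = Real.log a - G/a - ((if δ ≤ G then δ^2 else 0) - κ)/(4*a^2) := by ring
  calc Real.log (a - G + u) ≤ Real.log (a - G) + u/(a - G) := key1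
    _ ≤ Real.log a + (-G)/a - (if δ ≤ G then δ^2 else 0)/(4*a^2) + κ/(4*a^2) := by linarith
    _ = _ := hfin

set_option maxHeartbeats 2000000 in
/-- The escape claim for the random walk w_{n+1} = w_n + Γ_{n+1} - C e^{w_n} with
(Γ_n) i.i.d., centered, bounded above and not a.s. zero. -/
theorem random_walk_escape
    {Ω : Type*} [MeasurableSpace Ω] (P : Measure Ω) [IsProbabilityMeasure P]
    (Γ : ℕ → Ω → ℝ) (hmeas : ∀ n, Measurable (Γ n))
    (hindep : iIndepFun (fun n => Γ (n + 1)) P)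
    (hident : ∀ n : ℕ, IdentDistrib (Γ (n + 1)) (Γ 1) P P)
    (hint : Integrable (Γ 1) P) (hmean : ∫ ω, Γ 1 ω ∂P = 0)
    (hbdd : ∃ M : ℝ, ∀ᵐ ω ∂P, Γ 1 ω ≤ M)
    (hnonzero : ¬ (∀ᵐ ω ∂P, Γ 1 ω = 0))
    (C : ℝ) (hC : 0 < C) :
    ∃ A₀ < (0:ℝ), ∀ w₀ < A₀, ∀ w : ℕ → Ω → ℝ,
      (∀ ω, w 0 ω = w₀) →
      (∀ n : ℕ, ∀ ω, w (n + 1) ω = w n ω + Γ (n + 1) ω - C * Real.exp (w n ω)) →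
      P {ω | ∃ n : ℕ, w n ω ≥ A₀} = 1 := by
  classical
  obtain ⟨M₀, hM₀⟩ := hbdd
  set M : ℝ := max M₀ 1 with hMdef
  have hM1 : (1:ℝ) ≤ M := le_max_right _ _
  have hMae : ∀ᵐ ω ∂P, Γ 1 ω ≤ M := hM₀.mono fun ω h => le_trans h (le_max_left _ _)
  -- positive mass above some δ > 0, and below some -δ' < 0
  have hnot0 : P {ω | 0 < Γ 1 ω} ≠ 0 := by
    intro h0
    apply hnonzero
    have hle : ∀ᵐ ω ∂P, Γ 1 ω ≤ 0 := by
      rw [ae_iff]; simpa [not_le] using h0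
    have hz : ∫ ω, -Γ 1 ω ∂P = 0 := by rw [integral_neg, hmean, neg_zero]
    have h2 := (integral_eq_zero_iff_of_nonneg_ae
      (hle.mono fun ω h => neg_nonneg.2 h) hint.neg).mp hz
    exact h2.mono fun ω h => by simpa [neg_eq_zero] using h
  have hnot0' : P {ω | Γ 1 ω < 0} ≠ 0 := by
    intro h0
    apply hnonzero
    have hle : ∀ᵐ ω ∂P, 0 ≤ Γ 1 ω := by
      rw [ae_iff]; simpa [not_le] using h0
    exact (integral_eq_zero_iff_of_nonneg_ae hle hint).mp hmean
  obtain ⟨δ, hδpos, hpδ⟩ : ∃ δ : ℝ, 0 < δ ∧ P {ω | δ ≤ Γ 1 ω} ≠ 0 := by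
    by_contra h; push_neg at h
    apply hnot0
    have hsub : {ω | 0 < Γ 1 ω} ⊆ ⋃ k : ℕ, {ω | (1:ℝ)/(k+1) ≤ Γ 1 ω} := by
      intro ω hω
      obtain ⟨k, hk⟩ := exists_nat_one_div_lt (show (0:ℝ) < Γ 1 ω from hω)
      exact Set.mem_iUnion.2 ⟨k, hk.le⟩
    refine measure_mono_null hsub (measure_iUnion_null fun k => h _ (by positivity))
  obtain ⟨δ', hδ'pos, hqδ⟩ : ∃ δ' : ℝ, 0 < δ' ∧ P {ω | Γ 1 ω ≤ -δ'} ≠ 0 := by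
    by_contra h; push_neg at h
    apply hnot0'
    have hsub : {ω | Γ 1 ω < 0} ⊆ ⋃ k : ℕ, {ω | Γ 1 ω ≤ -((1:ℝ)/(k+1))} := by
      intro ω hω
      obtain ⟨k, hk⟩ := exists_nat_one_div_lt (show (0:ℝ) < -Γ 1 ω by
        simpa [neg_pos] using hω)
      exact Set.mem_iUnion.2 ⟨k, show Γ 1 ω ≤ -((1:ℝ)/(k+1)) by linarith⟩
    refine measure_mono_null hsub (measure_iUnion_null fun k => h _ (by positivity))
  set gΔ : ℝ → ℝ := fun t => if δ ≤ t then δ^2 else 0 with hgΔdef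
  have hgmeas : Measurable gΔ := by
    rw [hgΔdef]
    exact Measurable.ite (measurableSet_le measurable_const measurable_id) measurable_const
      measurable_const
  have hgbd : ∀ t, |gΔ t| ≤ δ^2 := by
    intro t; rw [hgΔdef]
    by_cases h : δ ≤ t <;> simp [h] <;> positivity
  set κ : ℝ := δ^2 * (P {ω | δ ≤ Γ 1 ω}).toReal with hκdef
  have hκpos : 0 < κ := by
    rw [hκdef]
    have := ENNReal.toReal_pos hpδ (measure_ne_top _ _)
    positivity
  have hκform : ∫ ω, gΔ (Γ 1 ω) ∂P = κ := by
    have hSm : MeasurableSet {ω | δ ≤ Γ 1 ω} := measurableSet_le measurable_const (hmeas 1)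
    have he : (fun ω => gΔ (Γ 1 ω)) = Set.indicator {ω | δ ≤ Γ 1 ω} (fun _ => δ^2) := by
      funext ω; rw [hgΔdef]
      by_cases h : δ ≤ Γ 1 ω <;> simp [Set.indicator, h]
    rw [he, integral_indicator_const _ hSm, hκdef, smul_eq_mul, mul_comm]
    rfl
  -- choice of N via a² e^{-a} → 0
  obtain ⟨N, hN⟩ : ∃ N : ℝ, ∀ a ≥ N, 4*C*(a^2 * Real.exp (-a)) < κ := by
    have ht : Tendsto (fun a : ℝ => 4*C*(a^2 * Real.exp (-a))) atTop (𝓝 0) := by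
      have := (Real.tendsto_pow_mul_exp_neg_atTop_nhds_zero 2).const_mul (4*C)
      simpa using this
    have := ht.eventually (gt_mem_nhds hκpos)
    exact eventually_atTop.mp this
  set A₀ : ℝ := -(max N (8*M+8)) with hA₀def
  have hA₀1 : 8*M + 8 ≤ -A₀ := by rw [hA₀def, neg_neg]; exact le_max_right _ _
  have hA₀N : N ≤ -A₀ := by rw [hA₀def, neg_neg]; exact le_max_left _ _
  have hA₀neg : A₀ < 0 := by nlinarith
  refine ⟨A₀, hA₀neg, ?_⟩
  intro w₀ hw₀ w hw0 hwrec
  -- measurability of w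
  have hwmeas : ∀ n, Measurable (w n) := by
    intro n; induction n with
    | zero => rw [show w 0 = fun _ => w₀ from funext hw0]; exact measurable_const
    | succ n ih =>
      rw [show w (n+1) = fun ω => w n ω + Γ (n+1) ω - C * Real.exp (w n ω) from
        funext (hwrec n)]
      exact (ih.add (hmeas (n+1))).sub ((Real.measurable_exp.comp ih).const_mul C)
  -- a.s. bound on all Γ (n+1)
  have hnull : P {ω | M < Γ 1 ω} = 0 := by
    have := ae_iff.mp hMae
    simpa [not_le] using this
  have hG : ∀ᵐ ω ∂P, ∀ m : ℕ, Γ (m+1) ω ≤ M := by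
    rw [ae_all_iff]
    intro m
    rw [ae_iff]
    have h2 : P {ω | M < Γ (m+1) ω} = 0 := by
      have := (hident m).measure_mem_eq (measurableSet_Ioi (a := M))
      simpa [Set.preimage, Set.mem_Ioi] using this.trans hnull
    simpa [not_le] using h2
  -- the filtration generated by Γ 1, ..., Γ n
  set ℱ : Filtration ℕ (inferInstance : MeasurableSpace Ω) :=
    { seq := fun n => ⨆ k ∈ Set.Iio n, MeasurableSpace.comap (Γ (k+1)) inferInstance
      mono' := fun i j hij => biSup_mono (fun k hk => lt_of_lt_of_le hk hij)
      le' := fun n => iSup₂_le fun k _ => (hmeas (k+1)).comap_le } with hℱdef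
  have hℱapp : ∀ n, ℱ n = ⨆ k ∈ Set.Iio n, MeasurableSpace.comap (Γ (k+1)) inferInstance :=
    fun n => rfl
  have hIndepn : ∀ n, Indep (MeasurableSpace.comap (Γ (n+1)) inferInstance) (ℱ n) P := by
    intro n
    have h := indep_biSup_compl (fun k => (hmeas (k+1)).comap_le)
      (hindep : iIndep (fun k => MeasurableSpace.comap (Γ (k+1)) inferInstance) P)
      ({n} : Set ℕ)
    have h1 : (⨆ k ∈ ({n} : Set ℕ), MeasurableSpace.comap (Γ (k+1))
        (inferInstance : MeasurableSpace ℝ)) = MeasurableSpace.comap (Γ (n+1)) inferInstance := by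
      simp
    rw [h1] at h
    refine indep_of_indep_of_le_right h ?_
    rw [hℱapp]
    refine iSup₂_le fun k hk => ?_
    have hkn : k ∈ ({n}ᶜ : Set ℕ) := by
      simp only [Set.mem_compl_iff, Set.mem_singleton_iff]
      exact Nat.ne_of_lt hk
    exact le_iSup₂ (f := fun (k : ℕ) (_ : k ∈ ({n}ᶜ : Set ℕ)) =>
      MeasurableSpace.comap (Γ (k+1)) inferInstance) k hkn
  -- w n is ℱ n measurable
  have hXmF : ∀ k n, k < n → Measurable[ℱ n] (Γ (k+1)) := by
    intro k n hk
    have h0 : Measurable[MeasurableSpace.comap (Γ (k+1)) inferInstance] (Γ (k+1)) :=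
      Measurable.of_comap_le le_rfl
    refine h0.mono ?_ le_rfl
    rw [hℱapp]
    exact le_iSup₂ (f := fun (k : ℕ) (_ : k ∈ Set.Iio n) =>
      MeasurableSpace.comap (Γ (k+1)) inferInstance) k hk
  have hwmF : ∀ n, Measurable[ℱ n] (w n) := by
    intro n; induction n with
    | zero => rw [show w 0 = fun _ => w₀ from funext hw0]; exact measurable_const
    | succ n ih =>
      rw [show w (n+1) = fun ω => w n ω + Γ (n+1) ω - C * Real.exp (w n ω) from
        funext (hwrec n)]
      have h1 : Measurable[ℱ (n+1)] (w n) := ih.mono (ℱ.mono n.le_succ) le_rfl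
      exact (h1.add (hXmF n (n+1) n.lt_succ_self)).sub
        ((Real.measurable_exp.comp h1).const_mul C)
  have hpreM : ∀ n, MeasurableSet[ℱ n] {ω | ∀ k ≤ n, w k ω < A₀} := by
    intro n
    have he : {ω | ∀ k ≤ n, w k ω < A₀} = ⋂ k ∈ Finset.range (n+1), {ω | w k ω < A₀} := by
      ext ω; simp [Nat.lt_succ_iff]
    rw [he]
    refine MeasurableSet.biInter (Finset.range (n+1)).countable_toSet (fun k hk => ?_)
    have hkn : k ≤ n := by
      have := Finset.mem_coe.mp hk
      simpa [Nat.lt_succ_iff] using this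
    exact measurableSet_lt ((hwmF k).mono (ℱ.mono hkn) le_rfl) measurable_const
  -- the stopped log process Y
  obtain ⟨Y, hY0, hYs⟩ : ∃ Y : ℕ → Ω → ℝ, (∀ ω, Y 0 ω = Real.log (-w₀)) ∧
      ∀ n ω, Y (n+1) ω =
        if (∀ k ≤ n, w k ω < A₀) then Real.log (-(w (n+1) ω)) else Y n ω :=
    ⟨fun n => Nat.rec (fun _ => Real.log (-w₀))
      (fun n Yn ω => if (∀ k ≤ n, w k ω < A₀) then Real.log (-(w (n+1) ω)) else Yn ω) n,
      fun _ => rfl, fun _ _ => rfl⟩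
  have hYmF : ∀ n, Measurable[ℱ n] (Y n) := by
    intro n; induction n with
    | zero => rw [show Y 0 = fun _ => Real.log (-w₀) from funext hY0]; exact measurable_const
    | succ n ih =>
      rw [show Y (n+1) = fun ω =>
          if (∀ k ≤ n, w k ω < A₀) then Real.log (-(w (n+1) ω)) else Y n ω from
        funext (hYs n)]
      exact Measurable.ite (ℱ.mono n.le_succ _ (hpreM n))
        (Real.measurable_log.comp (hwmF (n+1)).neg)
        (ih.mono (ℱ.mono n.le_succ) le_rfl)
  -- invariant of Y along trajectories with all Γ ≤ M
  have hInv : ∀ ω, (∀ m : ℕ, Γ (m+1) ω ≤ M) → ∀ n, ∃ m, m ≤ n ∧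
      Y n ω = Real.log (-(w m ω)) ∧ 1 ≤ -(w m ω) ∧ ((∀ k ≤ n, w k ω < A₀) → m = n) := by
    intro ω hbω n
    induction n with
    | zero =>
      refine ⟨0, le_rfl, by rw [hY0, hw0], ?_, fun _ => rfl⟩
      rw [hw0]; nlinarith
    | succ n ih =>
      by_cases hpre : ∀ k ≤ n, w k ω < A₀
      · refine ⟨n+1, le_rfl, by rw [hYs n ω, if_pos hpre], ?_, fun _ => rfl⟩
        have h1 := hpre n le_rfl
        have h2 := hbω n
        have h3 : 0 < C * Real.exp (w n ω) := by positivity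
        rw [hwrec n ω]
        nlinarith
      · obtain ⟨m, hm, hEq, h1, -⟩ := ih
        exact ⟨m, hm.trans n.le_succ, by rw [hYs n ω, if_neg hpre]; exact hEq, h1,
          fun hpre' => absurd (fun k hk => hpre' k (hk.trans n.le_succ)) hpre⟩
  -- integrability
  have hXint : ∀ n : ℕ, Integrable (Γ (n+1)) P := fun n => (hident n).integrable_iff.mpr hint
  have hwle : ∀ᵐ ω ∂P, ∀ n : ℕ, w n ω ≤ w₀ + n * M := by
    filter_upwards [hG] with ω hω
    intro n; induction n with
    | zero => simp [hw0]
    | succ n ih =>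
      rw [hwrec n ω]
      have h2 := hω n
      have h3 : 0 < C * Real.exp (w n ω) := by positivity
      push_cast
      nlinarith
  have hexpint : ∀ n, Integrable (fun ω => Real.exp (w n ω)) P := by
    intro n
    refine Integrable.mono' (integrable_const (Real.exp (w₀ + n * M)))
      ((Real.measurable_exp.comp (hwmeas n)).aestronglyMeasurable) ?_
    filter_upwards [hwle] with ω hω
    rw [Real.norm_eq_abs, abs_of_pos (Real.exp_pos _)]
    exact Real.exp_le_exp.2 (hω n)
  have hwint : ∀ n, Integrable (w n) P := by
    intro n; induction n with
    | zero => rw [show w 0 = fun _ => w₀ from funext hw0]; exact integrable_const w₀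
    | succ n ih =>
      rw [show w (n+1) = fun ω => w n ω + Γ (n+1) ω - C * Real.exp (w n ω) from
        funext (hwrec n)]
      exact (ih.add (hXint n)).sub ((hexpint n).const_mul C)
  have hYint : ∀ n, Integrable (Y n) P := by
    intro n
    refine Integrable.mono' (g := fun ω => ∑ k ∈ Finset.range (n+1), |w k ω|)
      (integrable_finset_sum _ (fun k _ => (hwint k).abs))
      (((hYmF n).mono (ℱ.le n) le_rfl).aestronglyMeasurable) ?_
    filter_upwards [hG] with ω hω
    obtain ⟨m, hm, hEq, h1, -⟩ := hInv ω hω n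
    rw [Real.norm_eq_abs, hEq, abs_of_nonneg (Real.log_nonneg h1)]
    have hlog : Real.log (-(w m ω)) ≤ -(w m ω) :=
      le_trans (Real.log_le_sub_one_of_pos (by linarith)) (by linarith)
    have habs : -(w m ω) ≤ |w m ω| := neg_le_abs _
    have hsum : |w m ω| ≤ ∑ k ∈ Finset.range (n+1), |w k ω| :=
      Finset.single_le_sum (f := fun k => |w k ω|) (fun k _ => abs_nonneg _)
        (Finset.mem_range.mpr (Nat.lt_succ_of_le hm))
    linarith
  -- the supermartingale property
  have hstep : ∀ n, P[Y (n+1)|ℱ n] ≤ᵐ[P] Y n := by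
    intro n
    set B : Ω → ℝ := fun ω => if (∀ k ≤ n, w k ω < A₀) then (w n ω)⁻¹ else 0 with hBdef
    set D : Ω → ℝ := fun ω => if (∀ k ≤ n, w k ω < A₀) then -((4 * (w n ω)^2)⁻¹) else 0
      with hDdef
    set T : Ω → ℝ := fun ω => gΔ (Γ (n+1) ω) - κ with hTdef
    have hA₀ne : A₀ ≠ 0 := ne_of_lt hA₀neg
    have hBbd : ∀ ω, |B ω| ≤ (-A₀)⁻¹ := by
      intro ω; rw [hBdef]
      by_cases h : ∀ k ≤ n, w k ω < A₀
      · simp only [if_pos h]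
        have h1 : w n ω < A₀ := h n le_rfl
        rw [abs_inv, abs_of_neg (by linarith : w n ω < 0)]
        have h2 : 0 < -A₀ := by linarith
        exact inv_anti₀ h2 (by linarith)
      · simp only [if_neg h, abs_zero]
        have : (0:ℝ) < -A₀ := by linarith
        positivity
    have hDbd : ∀ ω, |D ω| ≤ (4 * A₀^2)⁻¹ := by
      intro ω; rw [hDdef]
      by_cases h : ∀ k ≤ n, w k ω < A₀
      · simp only [if_pos h, abs_neg]
        have h1 : w n ω < A₀ := h n le_rfl
        have h2 : A₀^2 ≤ (w n ω)^2 := by nlinarith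
        have h3 : (0:ℝ) < 4 * A₀^2 := by positivity
        rw [abs_inv, abs_of_pos (by nlinarith : (0:ℝ) < 4 * (w n ω)^2)]
        exact inv_anti₀ h3 (by nlinarith)
      · simp only [if_neg h, abs_zero]
        positivity
    have hBm : Measurable[ℱ n] B := by
      rw [hBdef]
      exact Measurable.ite (hpreM n) (hwmF n).inv measurable_const
    have hDm : Measurable[ℱ n] D := by
      rw [hDdef]
      exact Measurable.ite (hpreM n) ((((hwmF n).pow_const 2).const_mul 4).inv).neg
        measurable_const
    have hTm : Measurable T := by
      rw [hTdef]
      exact (hgmeas.comp (hmeas (n+1))).sub measurable_const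
    have hTbd : ∀ ω, |T ω| ≤ δ^2 + |κ| := by
      intro ω; rw [hTdef]
      calc |gΔ (Γ (n+1) ω) - κ| ≤ |gΔ (Γ (n+1) ω)| + |κ| := abs_sub _ _
        _ ≤ δ^2 + |κ| := by have := hgbd (Γ (n+1) ω); linarith
    have hgXint : Integrable (fun ω => gΔ (Γ (n+1) ω)) P := by
      refine Integrable.mono' (integrable_const (δ^2))
        ((hgmeas.comp (hmeas (n+1))).aestronglyMeasurable) ?_
      exact Eventually.of_forall fun ω => by rw [Real.norm_eq_abs]; exact hgbd _
    have hTint : Integrable T P := by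
      rw [hTdef]; exact hgXint.sub (integrable_const κ)
    have hBXint : Integrable (fun ω => B ω * Γ (n+1) ω) P :=
      (hXint n).bdd_mul ((hBm.mono (ℱ.le n) le_rfl).aestronglyMeasurable)
        (Eventually.of_forall fun ω => by rw [Real.norm_eq_abs]; exact hBbd ω)
    have hDTint : Integrable (fun ω => D ω * T ω) P :=
      hTint.bdd_mul ((hDm.mono (ℱ.le n) le_rfl).aestronglyMeasurable)
        (Eventually.of_forall fun ω => by rw [Real.norm_eq_abs]; exact hDbd ω)
    have hBXint' : Integrable (B * Γ (n+1)) P := hBXint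
    have hDTint' : Integrable (D * T) P := hDTint
    have hZint : Integrable (Y n + B * Γ (n+1) + D * T) P :=
      ((hYint n).add hBXint').add hDTint'
    -- pointwise bound
    have hl : Y (n+1) ≤ᵐ[P] Y n + B * Γ (n+1) + D * T := by
      filter_upwards [hG] with ω hω
      simp only [Pi.add_apply, Pi.mul_apply]
      by_cases hpre : ∀ k ≤ n, w k ω < A₀
      · rw [hYs n ω, if_pos hpre, hBdef, hDdef]
        simp only [if_pos hpre]
        obtain ⟨m, hm, hEq, h1, hlast⟩ := hInv ω hω n
        have hYn : Y n ω = Real.log (-(w n ω)) := by rw [hEq, hlast hpre]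
        have hwn : w n ω < A₀ := hpre n le_rfl
        have haM : 8*M + 8 < -(w n ω) := by linarith
        have hu2 : (C * Real.exp (w n ω)) * (4*(-(w n ω))^2) ≤ κ := by
          have hNa := hN (-(w n ω)) (by linarith)
          have : Real.exp (w n ω) = Real.exp (-(-(w n ω))) := by rw [neg_neg]
          rw [this]
          nlinarith [Real.exp_pos (-(-(w n ω))), sq_nonneg (w n ω)]
        have hkey := step_ineq (M := M) (a := -(w n ω)) (G := Γ (n+1) ω)
          (u := C * Real.exp (w n ω)) (δ := δ) (κ := κ) hM1 (hω n) haM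
          (by positivity) hu2 hδpos
        have hw1 : -(w (n+1) ω) = -(w n ω) - Γ (n+1) ω + C * Real.exp (w n ω) := by
          rw [hwrec n ω]; ring
        rw [hYn, hw1]
        have hwne : w n ω ≠ 0 := by intro h; rw [h] at hwn; linarith
        have hgrw : gΔ (Γ (n+1) ω) = if δ ≤ Γ (n+1) ω then δ^2 else 0 := by rw [hgΔdef]
        have hrhs : Real.log (-(w n ω)) - Γ (n+1) ω/(-(w n ω))
              - ((if δ ≤ Γ (n+1) ω then δ^2 else 0) - κ)/(4*(-(w n ω))^2)
            = Real.log (-(w n ω)) + (w n ω)⁻¹ * Γ (n+1) ω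
              + -((4 * (w n ω)^2)⁻¹) * (gΔ (Γ (n+1) ω) - κ) := by
          rw [hgrw]
          field_simp [hwne]
          ring
        rw [← hrhs]
        exact hkey
      · rw [hYs n ω, if_neg hpre, hBdef, hDdef]
        simp only [if_neg hpre]
        simp
    -- conditional expectation computation
    have hYsm : StronglyMeasurable[ℱ n] (Y n) := (hYmF n).stronglyMeasurable
    have hXcm : Measurable[MeasurableSpace.comap (Γ (n+1)) inferInstance] (Γ (n+1)) :=
      Measurable.of_comap_le le_rfl
    have h1 : P[Γ (n+1)|ℱ n] =ᵐ[P] fun _ => 0 := by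
      have h := condExp_indep_eq (hmeas (n+1)).comap_le (ℱ.le n)
        hXcm.stronglyMeasurable (hIndepn n)
      have hz : ∫ ω, Γ (n+1) ω ∂P = 0 := by rw [(hident n).integral_eq]; exact hmean
      rw [hz] at h
      exact h
    have h2 : P[T|ℱ n] =ᵐ[P] fun _ => 0 := by
      have hTsm : StronglyMeasurable[MeasurableSpace.comap (Γ (n+1)) inferInstance] T := by
        rw [hTdef]
        exact ((hgmeas.comp hXcm).sub measurable_const).stronglyMeasurable
      have h := condExp_indep_eq (hmeas (n+1)).comap_le (ℱ.le n) hTsm (hIndepn n)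
      have hz : ∫ ω, T ω ∂P = 0 := by
        rw [hTdef]
        rw [integral_sub hgXint (integrable_const κ), integral_const]
        have he : ∫ ω, gΔ (Γ (n+1) ω) ∂P = κ := by
          have := ((hident n).comp hgmeas).integral_eq
          rw [show (gΔ ∘ (Γ (n+1))) = fun ω => gΔ (Γ (n+1) ω) from rfl] at this
          rw [this]
          exact hκform
        rw [he]
        simp
      rw [hz] at h
      exact h
    have h3 := condExp_mul_of_stronglyMeasurable_left hBm.stronglyMeasurable hBXint' (hXint n)
    have h4 := condExp_mul_of_stronglyMeasurable_left hDm.stronglyMeasurable hDTint' hTint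
    have hY' : P[Y n|ℱ n] = Y n := condExp_of_stronglyMeasurable (ℱ.le n) hYsm (hYint n)
    have hce : P[(Y n + B * Γ (n+1) + D * T)|ℱ n] =ᵐ[P] Y n := by
      calc P[(Y n + B * Γ (n+1) + D * T)|ℱ n]
          =ᵐ[P] P[(Y n + B * Γ (n+1))|ℱ n] + P[(D * T)|ℱ n] :=
            condExp_add ((hYint n).add hBXint') hDTint' _
        _ =ᵐ[P] (P[Y n|ℱ n] + P[(B * Γ (n+1))|ℱ n]) + P[(D * T)|ℱ n] :=
            (condExp_add (hYint n) hBXint' _).add EventuallyEq.rfl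
        _ =ᵐ[P] (Y n + B * (fun _ => (0:ℝ))) + D * (fun _ => (0:ℝ)) := by
            refine EventuallyEq.add (EventuallyEq.add ?_ ?_) ?_
            · exact Eventually.of_forall fun ω => by rw [hY']
            · exact h3.trans (EventuallyEq.mul EventuallyEq.rfl h1)
            · exact h4.trans (EventuallyEq.mul EventuallyEq.rfl h2)
        _ =ᵐ[P] Y n := by
            refine Eventually.of_forall fun ω => ?_
            simp
    exact EventuallyLE.trans (condExp_mono (hYint (n+1)) hZint hl) hce.le
  have hadp : StronglyAdapted ℱ Y := fun n => (hYmF n).stronglyMeasurable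
  have hsuper : Supermartingale Y ℱ P := supermartingale_nat hadp hYint hstep
  -- L¹ bound and a.s. convergence of Y
  have hYnonneg : ∀ n, ∀ᵐ ω ∂P, 0 ≤ Y n ω := by
    intro n
    filter_upwards [hG] with ω hω
    obtain ⟨m, hm, hEq, h1, -⟩ := hInv ω hω n
    rw [hEq]
    exact Real.log_nonneg h1
  have hEle : ∀ n, ∫ ω, Y n ω ∂P ≤ Real.log (-w₀) := by
    intro n
    have hle := hsuper.setIntegral_le (Nat.zero_le n) (MeasurableSet.univ (α := Ω))
    rw [Measure.restrict_univ] at hle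
    have h0 : ∫ ω, Y 0 ω ∂P = Real.log (-w₀) := by
      rw [show Y 0 = fun _ => Real.log (-w₀) from funext hY0, integral_const]
      simp
    rw [h0] at hle
    exact hle
  have hR : ∀ n, eLpNorm (Y n) 1 P ≤ ENNReal.ofReal (Real.log (-w₀)) := by
    intro n
    rw [eLpNorm_one_eq_lintegral_enorm, ← ofReal_integral_norm_eq_lintegral_enorm (hYint n)]
    apply ENNReal.ofReal_le_ofReal
    have h2 : ∫ ω, ‖Y n ω‖ ∂P = ∫ ω, Y n ω ∂P := by
      refine integral_congr_ae ?_
      filter_upwards [hYnonneg n] with ω hω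
      rw [Real.norm_eq_abs, abs_of_nonneg hω]
    rw [h2]
    exact hEle n
  have hconv : ∀ᵐ ω ∂P, ∃ c, Tendsto (fun n => Y n ω) atTop (𝓝 c) := by
    have hsub : Submartingale (-Y) ℱ P := hsuper.neg
    have hbdd : ∀ n, eLpNorm ((-Y) n) 1 P ≤ ENNReal.ofReal (Real.log (-w₀)) := by
      intro n
      rw [show (-Y) n = -(Y n) from rfl, eLpNorm_neg]
      exact hR n
    filter_upwards [hsub.exists_ae_tendsto_of_bdd hbdd] with ω hc
    obtain ⟨c, hc⟩ := hc
    exact ⟨-c, by simpa using hc.neg⟩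
  -- Borel–Cantelli: infinitely many Γ (n+1) ≤ -δ'
  have hbcm : ∀ n : ℕ, MeasurableSet ((Γ (n+1)) ⁻¹' Set.Iic (-δ')) :=
    fun n => (hmeas (n+1)) measurableSet_Iic
  have hiis : iIndepSet (fun n => (Γ (n+1)) ⁻¹' Set.Iic (-δ')) P := by
    rw [iIndepSet_iff_iIndepSets_singleton hbcm, iIndepSets_singleton_iff]
    intro t
    exact hindep.measure_inter_preimage_eq_mul (sets := fun _ => Set.Iic (-δ')) t
      (fun i _ => measurableSet_Iic)
  have hsum : (∑' n : ℕ, P ((Γ (n+1)) ⁻¹' Set.Iic (-δ'))) = ⊤ := by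
    have he : ∀ n : ℕ, P ((Γ (n+1)) ⁻¹' Set.Iic (-δ')) = P ((Γ 1) ⁻¹' Set.Iic (-δ')) :=
      fun n => (hident n).measure_mem_eq measurableSet_Iic
    rw [tsum_congr he]
    refine ENNReal.tsum_const_eq_top_of_ne_zero ?_
    have : (Γ 1) ⁻¹' Set.Iic (-δ') = {ω | Γ 1 ω ≤ -δ'} := rfl
    rw [this]
    exact hqδ
  have hBC := measure_limsup_eq_one hbcm hiis hsum
  have hBCae : ∀ᵐ ω ∂P, ∃ᶠ n in atTop, Γ (n+1) ω ≤ -δ' := by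
    have hml : MeasurableSet (limsup (fun n : ℕ => (Γ (n+1)) ⁻¹' Set.Iic (-δ')) atTop) :=
      MeasurableSet.measurableSet_limsup hbcm
    have h0 : P (limsup (fun n : ℕ => (Γ (n+1)) ⁻¹' Set.Iic (-δ')) atTop)ᶜ = 0 :=
      (prob_compl_eq_zero_iff hml).mpr hBC
    have hae : ∀ᵐ ω ∂P, ω ∈ limsup (fun n : ℕ => (Γ (n+1)) ⁻¹' Set.Iic (-δ')) atTop := by
      rw [ae_iff]
      exact h0
    filter_upwards [hae] with ω hω
    rw [mem_limsup_iff_frequently_mem] at hω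
    exact hω
  -- final assembly
  have hmsE : MeasurableSet {ω | ∃ n, w n ω ≥ A₀} := by
    have he : {ω | ∃ n, w n ω ≥ A₀} = ⋃ n, {ω | A₀ ≤ w n ω} := by
      ext ω; simp [Set.mem_iUnion]
    rw [he]
    exact MeasurableSet.iUnion fun n => measurableSet_le measurable_const (hwmeas n)
  rw [← prob_compl_eq_zero_iff hmsE]
  have haefin : ∀ᵐ ω ∂P, ∃ n, w n ω ≥ A₀ := by
    filter_upwards [hconv, hBCae, hG] with ω hc hbc hgb
    by_contra hcon
    push_neg at hcon
    obtain ⟨c, hc⟩ := hc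
    have hallpre : ∀ n, ∀ k ≤ n, w k ω < A₀ := fun n k _ => hcon k
    have hYn : ∀ n, Y n ω = Real.log (-(w n ω)) := by
      intro n
      obtain ⟨m, hm, hEq, h1, hlast⟩ := hInv ω hgb n
      rw [hEq, hlast (hallpre n)]
    have hw1 : ∀ n, (1:ℝ) ≤ -(w n ω) := by
      intro n
      obtain ⟨m, hm, hEq, h1, hlast⟩ := hInv ω hgb n
      rw [hlast (hallpre n)] at h1
      exact h1
    have hwt : Tendsto (fun n => w n ω) atTop (𝓝 (-(Real.exp c))) := by
      have h1 : ∀ n, w n ω = -Real.exp (Y n ω) := by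
        intro n
        rw [hYn n, Real.exp_log (by linarith [hw1 n] : (0:ℝ) < -(w n ω))]
        ring
      simp only [h1]
      exact ((Real.continuous_exp.tendsto c).comp hc).neg
    have hΓt : Tendsto (fun n => Γ (n+1) ω) atTop
        (𝓝 (C * Real.exp (-(Real.exp c)))) := by
      have h2 : ∀ n, Γ (n+1) ω = w (n+1) ω - w n ω + C * Real.exp (w n ω) := by
        intro n; rw [hwrec n ω]; ring
      simp only [h2]
      have hshift : Tendsto (fun n => w (n+1) ω) atTop (𝓝 (-(Real.exp c))) :=
        hwt.comp (tendsto_add_atTop_nat 1)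
      have hexp : Tendsto (fun n => C * Real.exp (w n ω)) atTop
          (𝓝 (C * Real.exp (-(Real.exp c)))) :=
        ((Real.continuous_exp.tendsto _).comp hwt).const_mul C
      have := (hshift.sub hwt).add hexp
      simpa using this
    have hev : ∀ᶠ n in atTop, 0 < Γ (n+1) ω :=
      hΓt.eventually (eventually_gt_nhds (by positivity))
    obtain ⟨n, hn1, hn2⟩ := (hbc.and_eventually hev).exists
    linarith
  exact ae_iff.mp haefin
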